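/- Let m ∈ (0,1), a ∈ [−π/2, 0], and b > a. Suppose γ_o(·|m) restricted to [a,b) is injective, γ_o(a|m) = γ_o(b|m), and the unit tangents satisfy γ_o′(a|m)/|γ_o′(a|m)| = −γ_o′(b|m)/|γ_o′(b|m)|. Then a = −π/4, b = 5π/4, and m = m_H. In other words, up to scaling, reparametrization and isometries, the heart-shaped elastica is the only orbitlike embedded cuspidal elastica. -/

import Mathlib

open Real MeasureTheory Set

noncomputable section

abbrev E2 := EuclideanSpace ℝ (Fin 2)

/-- The point of the Euclidean plane with coordinates `(a, b)`. -/
def mkE2 (a b : ℝ) : E2 := WithLp.toLp 2 ![a, b]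
/-- Incomplete elliptic integral of the first kind `F(x,m)`. -/
def Fell (x m : ℝ) : ℝ := ∫ θ in (0:ℝ)..x, 1 / Real.sqrt (1 - m * Real.sin θ ^ 2)

/-- Incomplete elliptic integral of the second kind `E(x,m)`. -/
def Eell (x m : ℝ) : ℝ := ∫ θ in (0:ℝ)..x, Real.sqrt (1 - m * Real.sin θ ^ 2)

/-- Complete elliptic integral of the first kind `K(m)`. -/
def Kc (m : ℝ) : ℝ := Fell (Real.pi / 2) m

/-- Complete elliptic integral of the second kind `E(m)`. -/
def Ec (m : ℝ) : ℝ := Eell (Real.pi / 2) m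

/-- `α(m) = arcsin √(1/(2m))`. -/
def alph (m : ℝ) : ℝ := Real.arcsin (Real.sqrt (1 / (2 * m)))

/-- `G(x,m) = ∫₀ˣ (1 − 2m sin²θ)(1 − m sin²θ)^{−1/2} dθ = 2E(x,m) − F(x,m)`. -/
def Gw (x m : ℝ) : ℝ :=
  ∫ θ in (0:ℝ)..x, (1 - 2 * m * Real.sin θ ^ 2) / Real.sqrt (1 - m * Real.sin θ ^ 2)

/-- `f(m) = ∫₀^{π−α(m)} (1 − 2m sin²θ)(1 − m sin²θ)^{−1/2} dθ`; its unique zero is `m_T`. -/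
def fT (m : ℝ) : ℝ := Gw (Real.pi - alph m) m
/-- `g(m) = ∫_{−π/4}^{5π/4} (1 − 2 sin²θ)(1 − m sin²θ)^{−1/2} dθ`; its unique zero is `m_H`. -/
def gH (m : ℝ) : ℝ :=
  ∫ θ in (-(Real.pi / 4))..(5 * Real.pi / 4),
    (1 - 2 * Real.sin θ ^ 2) / Real.sqrt (1 - m * Real.sin θ ^ 2)
/-- First component of the orbitlike parametrization. -/
def gammaO1 (m : ℝ) : ℝ → ℝ := fun x => (2 * Eell x m + (m - 2) * Fell x m) / m

/-- Second component of the orbitlike parametrization. -/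
def gammaO2 (m : ℝ) : ℝ → ℝ := fun x => -2 * Real.sqrt (1 - m * Real.sin x ^ 2) / m

/-- The orbitlike parametrization `γ_o(x|m) = (1/m)(2E(x,m) + (m−2)F(x,m), −2√(1 − m sin²x))`. -/
def gammaO (m : ℝ) : ℝ → E2 := fun x => mkE2 (gammaO1 m x) (gammaO2 m x)

/-! ### Auxiliary material for `stmt16` -/

section Aux

lemma base_pos {m : ℝ} (hm0 : 0 < m) (hm1 : m < 1) (θ : ℝ) :
    0 < 1 - m * Real.sin θ ^ 2 := by
  nlinarith [Real.sin_sq_le_one θ, sq_nonneg (Real.sin θ)]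

lemma sqrt_base_pos {m : ℝ} (hm0 : 0 < m) (hm1 : m < 1) (θ : ℝ) :
    0 < Real.sqrt (1 - m * Real.sin θ ^ 2) :=
  Real.sqrt_pos.2 (base_pos hm0 hm1 θ)

lemma cont_sqrt (m : ℝ) : Continuous fun θ : ℝ => Real.sqrt (1 - m * Real.sin θ ^ 2) := by
  fun_prop

lemma cont_inv_sqrt {m : ℝ} (hm0 : 0 < m) (hm1 : m < 1) :
    Continuous fun θ : ℝ => 1 / Real.sqrt (1 - m * Real.sin θ ^ 2) :=
  continuous_const.div (cont_sqrt m) fun θ => (sqrt_base_pos hm0 hm1 θ).ne'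

/-- The derivative of the first component (up to sign conventions):
`cos 2θ / √(1 − m sin²θ)`. -/
def fI (m : ℝ) : ℝ → ℝ := fun θ => Real.cos (2*θ) / Real.sqrt (1 - m * Real.sin θ ^ 2)

lemma cont_fI {m : ℝ} (hm0 : 0 < m) (hm1 : m < 1) : Continuous (fI m) :=
  (Real.continuous_cos.comp (by fun_prop)).div (cont_sqrt m)
    fun θ => (sqrt_base_pos hm0 hm1 θ).ne'

lemma intInt_fI {m : ℝ} (hm0 : 0 < m) (hm1 : m < 1) :
    ∀ t₁ t₂ : ℝ, IntervalIntegrable (fI m) volume t₁ t₂ :=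
  fun t₁ t₂ => (cont_fI hm0 hm1).intervalIntegrable t₁ t₂

/-- primitive of `fI`. -/
def Ix (m x : ℝ) : ℝ := ∫ θ in (0:ℝ)..x, fI m θ

lemma cos_two_eq (θ : ℝ) : Real.cos (2*θ) = 1 - 2 * Real.sin θ ^ 2 := by
  rw [Real.cos_two_mul, Real.cos_sq']; ring

lemma gammaO1_eq {m : ℝ} (hm0 : 0 < m) (hm1 : m < 1) (x : ℝ) :
    gammaO1 m x = Ix m x := by
  have key : 2 * Eell x m + (m - 2) * Fell x m = m * Ix m x := by
    unfold Eell Fell Ix fI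
    rw [← intervalIntegral.integral_const_mul, ← intervalIntegral.integral_const_mul,
      ← intervalIntegral.integral_const_mul,
      ← intervalIntegral.integral_add (f := fun θ => 2 * Real.sqrt (1 - m * Real.sin θ ^ 2))
        (g := fun θ => (m - 2) * (1 / Real.sqrt (1 - m * Real.sin θ ^ 2)))
        ((continuous_const.mul (cont_sqrt m)).intervalIntegrable 0 x :
          IntervalIntegrable (fun θ => 2 * Real.sqrt (1 - m * Real.sin θ ^ 2)) volume 0 x)
        ((continuous_const.mul (cont_inv_sqrt hm0 hm1)).intervalIntegrable 0 x :
          IntervalIntegrable (fun θ => (m - 2) * (1 / Real.sqrt (1 - m * Real.sin θ ^ 2)))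
            volume 0 x)]
    apply intervalIntegral.integral_congr
    intro θ _
    simp only []
    have h1 := base_pos hm0 hm1 θ
    have h2 := sqrt_base_pos hm0 hm1 θ
    have h3 : Real.sqrt (1 - m * Real.sin θ ^ 2) * Real.sqrt (1 - m * Real.sin θ ^ 2)
        = 1 - m * Real.sin θ ^ 2 := Real.mul_self_sqrt h1.le
    rw [cos_two_eq θ]
    field_simp
    nlinarith [h3]
  unfold gammaO1
  rw [key]
  field_simp

lemma hasDerivAt_Ix {m : ℝ} (hm0 : 0 < m) (hm1 : m < 1) (x : ℝ) :
    HasDerivAt (Ix m) (fI m x) x :=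
  ((cont_fI hm0 hm1).integral_hasStrictDerivAt 0 x).hasDerivAt

lemma continuous_Ix {m : ℝ} (hm0 : 0 < m) (hm1 : m < 1) : Continuous (Ix m) :=
  continuous_iff_continuousAt.2 fun x => (hasDerivAt_Ix hm0 hm1 x).continuousAt

lemma hasDerivAt_gammaO1 {m : ℝ} (hm0 : 0 < m) (hm1 : m < 1) (x : ℝ) :
    HasDerivAt (gammaO1 m) (fI m x) x := by
  have : gammaO1 m = Ix m := funext fun x => gammaO1_eq hm0 hm1 x
  rw [this]; exact hasDerivAt_Ix hm0 hm1 x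

lemma hasDerivAt_gammaO2 {m : ℝ} (hm0 : 0 < m) (hm1 : m < 1) (x : ℝ) :
    HasDerivAt (gammaO2 m) (Real.sin (2*x) / Real.sqrt (1 - m * Real.sin x ^ 2)) x := by
  have hinner : HasDerivAt (fun x : ℝ => 1 - m * Real.sin x ^ 2)
      (-(m * Real.sin (2*x))) x := by
    have h1 : HasDerivAt (fun x : ℝ => Real.sin x ^ 2)
        (2 * Real.sin x ^ (2-1) * Real.cos x) x := (Real.hasDerivAt_sin x).pow 2
    have h2 := (h1.const_mul m).const_sub (1:ℝ)
    refine h2.congr_deriv ?_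
    rw [Real.sin_two_mul]; ring
  have hsq : HasDerivAt (fun x : ℝ => Real.sqrt (1 - m * Real.sin x ^ 2))
      (-(m * Real.sin (2*x)) / (2 * Real.sqrt (1 - m * Real.sin x ^ 2))) x :=
    hinner.sqrt (base_pos hm0 hm1 x).ne'
  have h3 := (hsq.const_mul (-2)).div_const m
  refine h3.congr_deriv ?_
  have hs := sqrt_base_pos hm0 hm1 x
  have hm := hm0.ne'
  field_simp

lemma hasDerivAt_mkE2 {f g : ℝ → ℝ} {f' g' x : ℝ} (hf : HasDerivAt f f' x)
    (hg : HasDerivAt g g' x) :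
    HasDerivAt (fun x => mkE2 (f x) (g x)) (mkE2 f' g') x := by
  have h : HasDerivAt (fun x => (![f x, g x] : Fin 2 → ℝ)) ![f', g'] x := by
    rw [hasDerivAt_pi]
    intro i
    fin_cases i
    · simpa using hf
    · simpa using hg
  exact ((EuclideanSpace.equiv (Fin 2) ℝ).symm.toContinuousLinearMap.hasFDerivAt
    (x := (![f x, g x] : Fin 2 → ℝ))).comp_hasDerivAt x h

lemma hasDerivAt_gammaO {m : ℝ} (hm0 : 0 < m) (hm1 : m < 1) (x : ℝ) :
    HasDerivAt (gammaO m)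
      (mkE2 (fI m x) (Real.sin (2*x) / Real.sqrt (1 - m * Real.sin x ^ 2))) x :=
  hasDerivAt_mkE2 (hasDerivAt_gammaO1 hm0 hm1 x) (hasDerivAt_gammaO2 hm0 hm1 x)

lemma unit_tangent {m : ℝ} (hm0 : 0 < m) (hm1 : m < 1) (x : ℝ) :
    (‖deriv (gammaO m) x‖)⁻¹ • deriv (gammaO m) x
      = mkE2 (Real.cos (2*x)) (Real.sin (2*x)) := by
  have hd := (hasDerivAt_gammaO hm0 hm1 x).deriv
  rw [hd]
  have hw := base_pos hm0 hm1 x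
  have hsw := sqrt_base_pos hm0 hm1 x
  have hnorm : ‖mkE2 (fI m x) (Real.sin (2*x) / Real.sqrt (1 - m * Real.sin x ^ 2))‖
      = (Real.sqrt (1 - m * Real.sin x ^ 2))⁻¹ := by
    rw [EuclideanSpace.norm_eq]
    have : ∑ i, ‖(mkE2 (fI m x) (Real.sin (2*x) / Real.sqrt (1 - m * Real.sin x ^ 2))) i‖ ^ 2
        = (fI m x)^2 + (Real.sin (2*x) / Real.sqrt (1 - m * Real.sin x ^ 2))^2 := by
      simp [mkE2, Fin.sum_univ_two, Real.norm_eq_abs, sq_abs]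
    rw [this]
    unfold fI
    rw [div_pow, div_pow, ← add_div, Real.sq_sqrt hw.le]
    have hcs : Real.cos (2*x) ^ 2 + Real.sin (2*x) ^ 2 = 1 := by
      rw [add_comm]; exact Real.sin_sq_add_cos_sq (2*x)
    rw [hcs, one_div, Real.sqrt_inv]
  rw [hnorm, inv_inv]
  ext i
  fin_cases i
  · show Real.sqrt (1 - m * Real.sin x ^ 2) * fI m x = Real.cos (2*x)
    unfold fI; field_simp
  · show Real.sqrt (1 - m * Real.sin x ^ 2)
        * (Real.sin (2*x) / Real.sqrt (1 - m * Real.sin x ^ 2)) = Real.sin (2*x)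
    field_simp

lemma fI_even (m θ : ℝ) : fI m (-θ) = fI m θ := by
  unfold fI
  rw [show 2 * (-θ) = -(2*θ) by ring, Real.cos_neg, Real.sin_neg, neg_pow]
  simp

lemma fI_reflect (m θ : ℝ) : fI m (Real.pi - θ) = fI m θ := by
  unfold fI
  rw [show 2 * (Real.pi - θ) = -(2*θ) + 2*Real.pi by ring, Real.cos_add_two_pi, Real.cos_neg,
    Real.sin_pi_sub]

lemma fI_periodic (m : ℝ) : Function.Periodic (fI m) Real.pi := by
  intro θ
  unfold fI
  rw [show 2 * (θ + Real.pi) = 2*θ + 2*Real.pi by ring, Real.cos_add_two_pi, Real.sin_add_pi,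
    neg_pow]
  simp

lemma Ix_neg {m : ℝ} (hm0 : 0 < m) (hm1 : m < 1) (x : ℝ) : Ix m (-x) = - Ix m x := by
  have h := intervalIntegral.integral_comp_neg (a := (0:ℝ)) (b := x) (fI m)
  have h2 : (∫ θ in (0:ℝ)..x, fI m (-θ)) = ∫ θ in (0:ℝ)..x, fI m θ := by
    apply intervalIntegral.integral_congr; intro θ _; exact fI_even m θ
  rw [h2] at h
  have h3 : (∫ θ in (-x)..(-(0:ℝ)), fI m θ) = - Ix m (-x) := by
    rw [neg_zero, intervalIntegral.integral_symm]; rfl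
  rw [h3] at h
  unfold Ix at *
  linarith [h]

lemma Ix_reflect {m : ℝ} (hm0 : 0 < m) (hm1 : m < 1) (x : ℝ) :
    Ix m (Real.pi - x) = Ix m Real.pi - Ix m x := by
  have h := intervalIntegral.integral_comp_sub_left (a := (0:ℝ)) (b := x) (fI m) Real.pi
  have h2 : (∫ θ in (0:ℝ)..x, fI m (Real.pi - θ)) = Ix m x := by
    apply intervalIntegral.integral_congr; intro θ _; exact fI_reflect m θ
  rw [h2] at h
  have h3 : (∫ θ in (Real.pi - x)..(Real.pi - 0), fI m θ)
      = Ix m Real.pi - Ix m (Real.pi - x) := by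
    rw [sub_zero]
    rw [← intervalIntegral.integral_interval_sub_left (intInt_fI hm0 hm1 0 Real.pi)
      (intInt_fI hm0 hm1 0 (Real.pi - x))]
    rfl
  rw [h3] at h
  linarith [h]

lemma gH_eq_int_fI {m : ℝ} (hm0 : 0 < m) (hm1 : m < 1) :
    gH m = ∫ θ in (-(Real.pi/4))..(5*Real.pi/4), fI m θ := by
  unfold gH
  apply intervalIntegral.integral_congr
  intro θ _
  unfold fI
  rw [cos_two_eq θ]

lemma cont_sqrt_ratio {m : ℝ} (hm0 : 0 < m) (hm1 : m < 1) :
    Continuous fun θ : ℝ =>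
      (1 - 2*Real.sin θ^2) * Real.sqrt ((2 - m) / (1 - m * Real.sin θ ^ 2)) := by
  apply Continuous.mul (by fun_prop)
  apply Real.continuous_sqrt.comp
  exact continuous_const.div (by fun_prop) fun θ => (base_pos hm0 hm1 θ).ne'

lemma gH_scaled_eq {m : ℝ} (hm0 : 0 < m) (hm1 : m < 1) :
    Real.sqrt (2 - m) * gH m
      = ∫ θ in (-(Real.pi/4))..(5*Real.pi/4),
          (1 - 2*Real.sin θ^2) * Real.sqrt ((2 - m) / (1 - m * Real.sin θ ^ 2)) := by
  unfold gH
  rw [← intervalIntegral.integral_const_mul]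
  apply intervalIntegral.integral_congr
  intro θ _
  simp only []
  rw [Real.sqrt_div (by linarith : (0:ℝ) ≤ 2 - m)]
  ring

lemma gH_scaled_lt {m1 m2 : ℝ} (h01 : 0 < m1) (h11 : m1 < 1) (h02 : 0 < m2) (h12 : m2 < 1)
    (hlt : m1 < m2) :
    Real.sqrt (2 - m2) * gH m2 < Real.sqrt (2 - m1) * gH m1 := by
  rw [gH_scaled_eq h01 h11, gH_scaled_eq h02 h12]
  have hpi := Real.pi_pos
  apply intervalIntegral.integral_lt_integral_of_continuousOn_of_le_of_exists_lt
    (by nlinarith : -(Real.pi/4) < 5*Real.pi/4)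
    (cont_sqrt_ratio h02 h12).continuousOn (cont_sqrt_ratio h01 h11).continuousOn
  · intro x _
    set s := Real.sin x ^ 2 with hs
    have hs0 : 0 ≤ s := sq_nonneg _
    have hs1 : s ≤ 1 := Real.sin_sq_le_one x
    have hw1 : 0 < 1 - m1 * s := base_pos h01 h11 x
    have hw2 : 0 < 1 - m2 * s := base_pos h02 h12 x
    rcases le_total s (1/2) with hcase | hcase
    · have hr : (2-m2)/(1-m2*s) ≤ (2-m1)/(1-m1*s) := by
        rw [div_le_div_iff₀ hw2 hw1]; nlinarith
      have hsr := Real.sqrt_le_sqrt hr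
      have h12s : (0:ℝ) ≤ 1-2*s := by linarith
      exact mul_le_mul_of_nonneg_left hsr h12s
    · have hr : (2-m1)/(1-m1*s) ≤ (2-m2)/(1-m2*s) := by
        rw [div_le_div_iff₀ hw1 hw2]; nlinarith
      have hsr := Real.sqrt_le_sqrt hr
      have h12s : 1-2*s ≤ (0:ℝ) := by linarith
      nlinarith [Real.sqrt_nonneg ((2-m1)/(1-m1*s)), Real.sqrt_nonneg ((2-m2)/(1-m2*s))]
  · refine ⟨0, ⟨by linarith, by linarith⟩, ?_⟩
    simp only [Real.sin_zero]
    norm_num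
    exact Real.sqrt_lt_sqrt (by linarith) (by linarith)

lemma gH_unique {m1 m2 : ℝ} (h01 : 0 < m1) (h11 : m1 < 1) (h02 : 0 < m2) (h12 : m2 < 1)
    (hz1 : gH m1 = 0) (hz2 : gH m2 = 0) : m1 = m2 := by
  rcases lt_trichotomy m1 m2 with h | h | h
  · have := gH_scaled_lt h01 h11 h02 h12 h
    rw [hz1, hz2, mul_zero, mul_zero] at this
    exact absurd this (lt_irrefl 0)
  · exact h
  · have := gH_scaled_lt h02 h12 h01 h11 h
    rw [hz1, hz2, mul_zero, mul_zero] at this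
    exact absurd this (lt_irrefl 0)

end Aux

lemma aux_n_nonneg {a b : ℝ} (hab : a < b) {n : ℤ} (hn : b - a = (2*(n:ℝ)+1) * Real.pi / 2) :
    0 ≤ n := by
  have hpi := Real.pi_pos
  by_contra hneg
  push_neg at hneg
  have h1 : n ≤ -1 := by omega
  have h2 : (n:ℝ) ≤ -1 := by exact_mod_cast h1
  nlinarith

lemma aux_a_eq {a : ℝ} (h1 : -(Real.pi/2) ≤ a) (h2 : a ≤ 0) (h : Real.cos (2*a) = 0) :
    a = -(Real.pi/4) := by
  obtain ⟨k, hk⟩ := Real.cos_eq_zero_iff.mp h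
  have hpi := Real.pi_pos
  have hk2 : (-2:ℝ) ≤ 2*(k:ℝ)+1 := by nlinarith
  have hk3 : 2*(k:ℝ)+1 ≤ 0 := by nlinarith
  have hk2' : (-2:ℤ) ≤ 2*k+1 := by exact_mod_cast hk2
  have hk3' : 2*k+1 ≤ (0:ℤ) := by exact_mod_cast hk3
  have hk1 : k = -1 := by omega
  rw [hk1] at hk
  push_cast at hk
  linarith

lemma aux_cos_zero {a b : ℝ} (hcos : Real.cos (2*a) = -Real.cos (2*b))
    (hsin : Real.sin (2*a) = -Real.sin (2*b)) : Real.cos (b - a) = 0 := by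
  have h1 : Real.cos (2*b - 2*a) = -1 := by
    rw [Real.cos_sub, hcos, hsin]
    nlinarith [Real.sin_sq_add_cos_sq (2*b)]
  have h2 := Real.cos_two_mul (b - a)
  rw [show 2*(b-a) = 2*b - 2*a by ring, h1] at h2
  have h3 : Real.cos (b-a) ^ 2 = 0 := by nlinarith
  exact pow_eq_zero_iff (two_ne_zero).elim |>.mp h3

lemma aux_split {m : ℝ} (hm0 : 0 < m) (hm1 : m < 1) (n : ℤ) :
    (∫ θ in (-(Real.pi/4))..(Real.pi/4 + (n:ℝ)*Real.pi), fI m θ)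
      = (∫ θ in (-(Real.pi/4))..(Real.pi/4), fI m θ) + (n:ℝ) * Ix m Real.pi := by
  have h1 : (∫ θ in (-(Real.pi/4))..(Real.pi/4 + (n:ℝ)*Real.pi), fI m θ)
      = (∫ θ in (-(Real.pi/4))..(Real.pi/4), fI m θ)
        + ∫ θ in (Real.pi/4)..(Real.pi/4 + (n:ℝ)*Real.pi), fI m θ :=
    (intervalIntegral.integral_add_adjacent_intervals (intInt_fI hm0 hm1 _ _)
      (intInt_fI hm0 hm1 _ _)).symm
  have hzs := (fI_periodic m).intervalIntegral_add_zsmul_eq n (Real.pi/4)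
    (intInt_fI hm0 hm1)
  have hTP : (∫ θ in (Real.pi/4)..(Real.pi/4 + Real.pi), fI m θ) = Ix m Real.pi := by
    have h := (fI_periodic m).intervalIntegral_add_eq (Real.pi/4) 0
    rw [h]
    simp only [zero_add]
    rfl
  have hb' : Real.pi/4 + (n:ℝ)*Real.pi = Real.pi/4 + n • Real.pi := by
    rw [zsmul_eq_mul]
  rw [h1, hb', hzs, hTP, zsmul_eq_mul]

/-- Proposition 2.25, uniqueness of orbitlike ECEs: if the orbitlike
parametrization `γ_o(·|m)` restricted to `[a, b)` (with `a ∈ [−π/2, 0]`) is injective, closes up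
at its endpoints and has opposite unit tangents there, then `a = −π/4`, `b = 5π/4` and
`m = m_H`; i.e. the curve is the heart-shaped elastica. -/
theorem stmt16 (mH : ℝ) (hmH : mH ∈ Set.Ioo (0:ℝ) 1) (hmHzero : gH mH = 0)
    (m a b : ℝ) (hm : m ∈ Set.Ioo (0:ℝ) 1) (ha : a ∈ Set.Icc (-(Real.pi / 2)) 0) (hab : a < b)
    (hinj : Set.InjOn (gammaO m) (Set.Ico a b))
    (hclose : gammaO m a = gammaO m b)
    (htang : (‖deriv (gammaO m) a‖)⁻¹ • deriv (gammaO m) a =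
      -((‖deriv (gammaO m) b‖)⁻¹ • deriv (gammaO m) b)) :
    a = -(Real.pi / 4) ∧ b = 5 * Real.pi / 4 ∧ m = mH := by
  obtain ⟨hm0, hm1⟩ := hm
  obtain ⟨hmH0, hmH1⟩ := hmH
  obtain ⟨hal, har⟩ := ha
  have hpi := Real.pi_pos
  -- components of the closing-up condition
  have hc1 : gammaO1 m a = gammaO1 m b := by
    have := congrArg (fun v : E2 => v 0) hclose; simpa [gammaO, mkE2] using this
  have hc2 : gammaO2 m a = gammaO2 m b := by
    have := congrArg (fun v : E2 => v 1) hclose; simpa [gammaO, mkE2] using this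
  clear hclose
  -- unit tangent condition
  rw [unit_tangent hm0 hm1 a, unit_tangent hm0 hm1 b] at htang
  have hcos : Real.cos (2*a) = -Real.cos (2*b) := by
    have := congrArg (fun v : E2 => v 0) htang; simpa [mkE2] using this
  have hsin : Real.sin (2*a) = -Real.sin (2*b) := by
    have := congrArg (fun v : E2 => v 1) htang; simpa [mkE2] using this
  clear htang
  obtain ⟨n, hn⟩ := Real.cos_eq_zero_iff.mp (aux_cos_zero hcos hsin)
  have hn0 : 0 ≤ n := aux_n_nonneg hab hn
  -- from the second component: sin² a = sin² b
  have hsin2 : Real.sin a ^ 2 = Real.sin b ^ 2 := by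
    unfold gammaO2 at hc2
    have h2 : Real.sqrt (1 - m * Real.sin a ^ 2) = Real.sqrt (1 - m * Real.sin b ^ 2) := by
      have hm := hm0.ne'
      field_simp at hc2
      linarith
    · have h3 := congrArg (fun t : ℝ => t^2) h2
      simp only [Real.sq_sqrt (base_pos hm0 hm1 a).le,
        Real.sq_sqrt (base_pos hm0 hm1 b).le] at h3
      nlinarith
  -- hence cos 2a = 0
  have hcos2a : Real.cos (2*a) = 0 := by
    have hb2 : Real.cos (2*b) = -Real.cos (2*a) := by
      have he : 2*b = (2*a + Real.pi) + (n:ℝ)*(2*Real.pi) := by linear_combination 2*hn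
      rw [he, Real.cos_add_int_mul_two_pi, Real.cos_add_pi]
    have e1 : Real.cos (2*a) = Real.cos (2*b) := by
      rw [cos_two_eq a, cos_two_eq b, hsin2]
    linarith
  -- a = -π/4
  have ha4 : a = -(Real.pi/4) := aux_a_eq hal har hcos2a
  -- b = π/4 + n π
  have hbval : b = Real.pi/4 + (n:ℝ)*Real.pi := by
    rw [ha4] at hn; push_cast at hn ⊢; linarith
  -- total horizontal displacement vanishes
  have hIab : Ix m a = Ix m b := by
    rw [← gammaO1_eq hm0 hm1, ← gammaO1_eq hm0 hm1]; exact hc1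
  have htot : (∫ θ in a..b, fI m θ) = 0 := by
    rw [← intervalIntegral.integral_interval_sub_left (intInt_fI hm0 hm1 0 b)
      (intInt_fI hm0 hm1 0 a)]
    have e1 : (∫ θ in (0:ℝ)..b, fI m θ) = Ix m b := rfl
    have e2 : (∫ θ in (0:ℝ)..a, fI m θ) = Ix m a := rfl
    rw [e1, e2, hIab, sub_self]
  -- split the displacement
  have hD : 0 < ∫ θ in (-(Real.pi/4))..(Real.pi/4), fI m θ := by
    apply intervalIntegral.intervalIntegral_pos_of_pos_on (intInt_fI hm0 hm1 _ _)
    · intro x hx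
      obtain ⟨hx1, hx2⟩ := hx
      apply div_pos _ (sqrt_base_pos hm0 hm1 x)
      exact Real.cos_pos_of_mem_Ioo ⟨by linarith, by linarith⟩
    · linarith
  have hsplit : (∫ θ in (-(Real.pi/4))..(Real.pi/4), fI m θ) + (n:ℝ) * Ix m Real.pi = 0 := by
    have htot' := htot
    rw [ha4, hbval] at htot'
    rw [aux_split hm0 hm1 n] at htot'
    exact htot'
  -- case analysis on n
  rcases lt_trichotomy n 1 with hn1 | hn1 | hn1
  · -- n = 0 : impossible
    exfalso
    have hn00 : n = 0 := by omega
    rw [hn00] at hsplit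
    push_cast at hsplit
    linarith
  · -- n = 1 : the heart-shaped elastica
    subst hn1
    have hb5 : b = 5 * Real.pi / 4 := by rw [hbval]; push_cast; ring
    refine ⟨ha4, hb5, ?_⟩
    have hgHm : gH m = 0 := by
      rw [gH_eq_int_fI hm0 hm1]
      have e : (∫ θ in (-(Real.pi/4))..(5*Real.pi/4), fI m θ) = ∫ θ in a..b, fI m θ := by
        rw [ha4, hb5]
      rw [e]
      exact htot
    exact gH_unique hm0 hm1 hmH0 hmH1 hgHm hmHzero
  · -- n ≥ 2 : contradicts injectivity
    exfalso
    have hn2 : (2:ℝ) ≤ (n:ℝ) := by exact_mod_cast hn1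
    have h2pi : 2*Real.pi ≤ (n:ℝ)*Real.pi := mul_le_mul_of_nonneg_right hn2 hpi.le
    have hIodd : Ix m (-(Real.pi/4)) = - Ix m (Real.pi/4) := Ix_neg hm0 hm1 (Real.pi/4)
    have hD2 : (∫ θ in (-(Real.pi/4))..(Real.pi/4), fI m θ) = 2 * Ix m (Real.pi/4) := by
      have hsub : Ix m (Real.pi/4) - Ix m (-(Real.pi/4))
          = ∫ θ in (-(Real.pi/4))..(Real.pi/4), fI m θ := by
        rw [← intervalIntegral.integral_interval_sub_left (intInt_fI hm0 hm1 0 (Real.pi/4))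
          (intInt_fI hm0 hm1 0 (-(Real.pi/4)))]
        rfl
      linarith
    have hPneg : Ix m Real.pi < 0 := by
      by_contra hge
      push_neg at hge
      have : 0 ≤ (n:ℝ) * Ix m Real.pi := mul_nonneg (by linarith) hge
      linarith
    have hnP : (n:ℝ) * Ix m Real.pi ≤ 2 * Ix m Real.pi :=
      mul_le_mul_of_nonpos_right hn2 hPneg.le
    have hlow : Ix m (-(Real.pi/4)) < Ix m Real.pi / 2 := by
      rw [hIodd]
      linarith
    have hhigh : Ix m Real.pi / 2 < Ix m (Real.pi/4) := by
      linarith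
    obtain ⟨x₀, hx₀mem, hx₀val⟩ := intermediate_value_Ioo
      (by linarith : -(Real.pi/4) ≤ Real.pi/4) (continuous_Ix hm0 hm1).continuousOn
      (⟨hlow, hhigh⟩ : Ix m Real.pi / 2 ∈ Ioo (Ix m (-(Real.pi/4))) (Ix m (Real.pi/4)))
    obtain ⟨hx₀1, hx₀2⟩ := hx₀mem
    have hrefl : Ix m (Real.pi - x₀) = Ix m Real.pi - Ix m x₀ := Ix_reflect hm0 hm1 x₀
    have hmem1 : x₀ ∈ Set.Ico a b := by
      constructor
      · rw [ha4]; linarith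
      · rw [hbval]; linarith
    have hmem2 : Real.pi - x₀ ∈ Set.Ico a b := by
      constructor
      · rw [ha4]; linarith
      · rw [hbval]; linarith
    have heq : gammaO m x₀ = gammaO m (Real.pi - x₀) := by
      unfold gammaO
      have h1 : gammaO1 m x₀ = gammaO1 m (Real.pi - x₀) := by
        rw [gammaO1_eq hm0 hm1, gammaO1_eq hm0 hm1, hrefl, hx₀val]
        ring
      have h2 : gammaO2 m x₀ = gammaO2 m (Real.pi - x₀) := by
        unfold gammaO2
        rw [Real.sin_pi_sub]
      rw [h1, h2]
    have := hinj hmem1 hmem2 heq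
    linarith [this]
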